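/- Path compression preserves the equivalence relation: let X be a finite type, f : X → X with ≤f antisymmetric, x : X, and rx : X with f x ≠ x and rx ≤f root f x and x <f rx (i.e., x ≤f rx and x ≠ rx). Let g = Function.update f x rx. Then for all n m : X, n ≡g m ↔ n ≡f m. -/
import Mathlib


def lef {X : Type*} (f : X → X) (n m : X) : Prop :=
  Relation.ReflTransGen (fun a b => b = f a) n m

def eqf {X : Type*} (f : X → X) (n m : X) : Prop :=
  ∃ k, lef f n k ∧ lef f m k

theorem stmt_9 {X : Type*} [Fintype X] [DecidableEq X] (f : X → X)
    (antisym : ∀ n m : X, lef f n m → lef f m n → n = m)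
    (x rx : X) (root : X → X)
    (hroot : ∀ n, lef f n (root n) ∧ f (root n) = root n)
    (hx : f x ≠ x)
    (hrx : lef f rx (root x))
    (hlt : lef f x rx ∧ x ≠ rx) :
    ∀ n m : X, eqf (Function.update f x rx) n m ↔ eqf f n m := by
  set g := Function.update f x rx with hg
  -- g-reachability implies f-reachability
  have hsub : ∀ a b : X, lef g a b → lef f a b := by
    intro a b h
    induction h with
    | refl => exact .refl
    | @tail b' c' _ hbc ih =>
      by_cases hb : b' = x
      · subst hb
        rw [hg, Function.update_self] at hbc
        subst hbc
        exact ih.trans hlt.1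
      · rw [hg, Function.update_of_ne hb] at hbc
        subst hbc
        exact ih.tail rfl
  -- from a fixed point, reachability implies equality
  have hfix : ∀ p q : X, f p = p → lef f p q → q = p := by
    intro p q hp h
    induction h with
    | refl => rfl
    | tail _ hbc ih => subst ih; rw [hbc, hp]
  -- right uniqueness / totality
  have htot : ∀ a b c : X, lef f a b → lef f a c → lef f b c ∨ lef f c b := by
    intro a b c hab hac
    exact Relation.ReflTransGen.total_of_right_unique
      (fun _ _ _ h1 h2 => h1.trans h2.symm) hab hac
  -- uniqueness of reachable fixed points
  have rootuniq : ∀ a p : X, lef f a p → f p = p → p = root a := by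
    intro a p hap hp
    rcases htot a p (root a) hap (hroot a).1 with h | h
    · exact (hfix p (root a) hp h).symm
    · exact hfix (root a) p (hroot a).2 h
  -- if the chain from a avoids x, it survives the update
  have avoid : ∀ a b : X, lef f a b → (∀ c, lef f a c → c ≠ x) → lef g a b := by
    intro a b hab hav
    induction hab with
    | refl => exact .refl
    | @tail b' c' hab' hbc ih =>
      have hb : b' ≠ x := hav b' hab'
      refine ih.tail ?_
      rw [hg, Function.update_of_ne hb]
      exact hbc
  -- rx's chain to root x avoids x
  have hrxg : lef g rx (root x) := by
    refine avoid rx (root x) hrx ?_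
    intro c hc hcx
    exact hlt.2 (antisym x rx hlt.1 (hcx ▸ hc))
  -- every element reaches fixed points under g
  have helper : ∀ q a : X, lef f a q → f q = q → lef g a q := by
    intro q a h hq
    induction h using Relation.ReflTransGen.head_induction_on with
    | refl => exact .refl
    | head hab hbr ih =>
      rename_i a' b
      have ha'r : lef f a' q := Relation.ReflTransGen.head hab hbr
      by_cases hax : a' = x
      · have hroots : q = root x := rootuniq x q (hax ▸ ha'r) hq
        have hr : lef g rx q := hroots ▸ hrxg
        refine Relation.ReflTransGen.head ?_ hr
        rw [hax, hg, Function.update_self]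
      · refine Relation.ReflTransGen.head ?_ ih
        rw [hg, Function.update_of_ne hax]
        exact hab
  have hgroot : ∀ a : X, lef g a (root a) := fun a =>
    helper (root a) a (hroot a).1 (hroot a).2
  intro n m
  constructor
  · rintro ⟨k, h1, h2⟩
    exact ⟨k, hsub n k h1, hsub m k h2⟩
  · rintro ⟨k, h1, h2⟩
    have e1 : root k = root n := rootuniq n (root k) (h1.trans (hroot k).1) (hroot k).2
    have e2 : root k = root m := rootuniq m (root k) (h2.trans (hroot k).1) (hroot k).2
    exact ⟨root k, e1 ▸ hgroot n, e2 ▸ hgroot m⟩
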